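/- Decoding a good SAT assignment from local agreement: Let Φ be a 3-CNF formula on variable set X with m clauses, each variable appearing in at most Δ clauses and at least one clause. Let 𝓣* be a (γ,μ)-uniform collection of subsets of clauses (with respect to the universe of clauses), and for each T ∈ 𝓣* let σ_T be an assignment to var(T) satisfying all clauses of T. If there exists ψ: X → {0,1} with E_{T∈𝓣*}[disagr(ψ, σ_T)] ≤ νn (where n = |X|), then val(ψ) ≥ 1 − μ − 3νΔ/γ. -/
import Mathlib


open Finset

open Classical in
/-- Decoding a good SAT assignment from local agreement: if `𝓣*` is a `(γ, μ)`-uniform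
collection of subsets of the clauses of a 3-CNF formula (each variable in at most `Δ` and at
least one clause), each `σ_T` satisfies all clauses of `T`, and a global assignment `ψ`
satisfies `E_{T∈𝓣*}[disagr(ψ, σ_T)] ≤ νn`, then `ψ` satisfies at least a `1 − μ − 3νΔ/γ`
fraction of the clauses. -/
theorem stmt_14 {ι X : Type} [Fintype ι] [Fintype X] [DecidableEq ι] [DecidableEq X]
    (𝓒 : Finset ι) (hne : 𝓒.Nonempty)
    -- each clause is an OR of at most 3 literals (variable, polarity)
    (lit : ι → Finset (X × Bool)) (h3 : ∀ C ∈ 𝓒, (lit C).card ≤ 3)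
    (Δ : ℕ)
    (hΔ : ∀ x : X, (𝓒.filter (fun C => x ∈ (lit C).image Prod.fst)).card ≤ Δ)
    (h1 : ∀ x : X, 1 ≤ (𝓒.filter (fun C => x ∈ (lit C).image Prod.fst)).card)
    (γ μ ν : ℝ) (hγ : 0 < γ) (hμ : 0 ≤ μ) (hν : 0 ≤ ν)
    (𝓣s : Finset (Finset ι)) (h𝓣 : ∀ T ∈ 𝓣s, T ⊆ 𝓒) (h𝓣ne : 𝓣s.Nonempty)
    -- (γ, μ)-uniformity of 𝓣*
    (hunif : (1 - μ) * (𝓒.card : ℝ)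
      ≤ ((𝓒.filter (fun C =>
          γ * (𝓣s.card : ℝ) ≤ ((𝓣s.filter (fun T => C ∈ T)).card : ℝ))).card : ℝ))
    -- each local assignment σ_T satisfies all clauses of T
    (σ : Finset ι → X → Bool)
    (hσ : ∀ T ∈ 𝓣s, ∀ C ∈ T, ∃ l ∈ lit C, σ T l.1 = l.2)
    (ψ : X → Bool)
    -- E_{T ∈ 𝓣*}[disagr(ψ, σ_T)] ≤ ν n  where n = |X|
    (hdis : (∑ T ∈ 𝓣s,
        (((T.biUnion (fun C => (lit C).image Prod.fst)).filter
            (fun x => ψ x ≠ σ T x)).card : ℝ))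
      ≤ ν * (Fintype.card X : ℝ) * (𝓣s.card : ℝ)) :
    (1 - μ - 3 * ν * (Δ : ℝ) / γ) * (𝓒.card : ℝ)
      ≤ ((𝓒.filter (fun C => ∃ l ∈ lit C, ψ l.1 = l.2)).card : ℝ) := by
  classical
  have ht : 0 < 𝓣s.card := Finset.card_pos.mpr h𝓣ne
  set vars : ι → Finset X := fun C => (lit C).image Prod.fst with hvars
  set Sat := 𝓒.filter (fun C => ∃ l ∈ lit C, ψ l.1 = l.2) with hSat
  set Hv := 𝓒.filter (fun C =>
      γ * (𝓣s.card : ℝ) ≤ ((𝓣s.filter (fun T => C ∈ T)).card : ℝ)) with hHv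
  set HB := Hv.filter (fun C => ¬ ∃ l ∈ lit C, ψ l.1 = l.2) with hHB
  -- per-T counting bound
  have hC : ∀ T ∈ 𝓣s, (HB.filter (fun C => C ∈ T)).card
      ≤ Δ * ((T.biUnion vars).filter (fun x => ψ x ≠ σ T x)).card := by
    intro T hT
    set D := (T.biUnion vars).filter (fun x => ψ x ≠ σ T x) with hD
    have hsub : HB.filter (fun C => C ∈ T)
        ⊆ D.biUnion (fun x => (HB.filter (fun C => C ∈ T)).filter (fun C => x ∈ vars C)) := by
      intro C hC'
      have hC'' := hC'
      simp only [hHB, mem_filter] at hC''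
      obtain ⟨⟨hCH, hbad⟩, hCT⟩ := hC''
      obtain ⟨l, hl, hσl⟩ := hσ T hT C hCT
      have hψl : ψ l.1 ≠ l.2 := fun h => hbad ⟨l, hl, h⟩
      have hx : l.1 ∈ D := by
        simp only [hD, mem_filter, mem_biUnion]
        exact ⟨⟨C, hCT, mem_image_of_mem _ hl⟩, by rw [hσl]; exact hψl⟩
      refine mem_biUnion.mpr ⟨l.1, hx, ?_⟩
      exact mem_filter.mpr ⟨hC', mem_image_of_mem _ hl⟩
    calc (HB.filter (fun C => C ∈ T)).card
        ≤ (D.biUnion (fun x => (HB.filter (fun C => C ∈ T)).filter (fun C => x ∈ vars C))).card :=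
          Finset.card_le_card hsub
      _ ≤ ∑ x ∈ D, ((HB.filter (fun C => C ∈ T)).filter (fun C => x ∈ vars C)).card :=
          Finset.card_biUnion_le
      _ ≤ ∑ x ∈ D, Δ := by
          refine Finset.sum_le_sum fun x _ => ?_
          refine le_trans (Finset.card_le_card ?_) (hΔ x)
          intro C hC'
          simp only [mem_filter] at hC' ⊢
          refine ⟨?_, hC'.2⟩
          have := hC'.1.1
          simp only [hHB, hHv, mem_filter] at this
          exact this.1.1
      _ = Δ * D.card := by rw [Finset.sum_const, smul_eq_mul, mul_comm]
  -- double counting swap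
  have hswap : ∑ C ∈ HB, (𝓣s.filter (fun T => C ∈ T)).card
      = ∑ T ∈ 𝓣s, (HB.filter (fun C => C ∈ T)).card := by
    simp_rw [Finset.card_filter]
    exact Finset.sum_comm
  -- n ≤ 3m
  have hn3m : Fintype.card X ≤ 3 * 𝓒.card := by
    calc Fintype.card X = ∑ _x : X, 1 := by simp
      _ ≤ ∑ x : X, (𝓒.filter (fun C => x ∈ vars C)).card :=
          Finset.sum_le_sum fun x _ => h1 x
      _ = ∑ C ∈ 𝓒, (Finset.univ.filter (fun x : X => x ∈ vars C)).card := by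
          simp_rw [Finset.card_filter]
          exact Finset.sum_comm
      _ = ∑ C ∈ 𝓒, (vars C).card := by
          refine Finset.sum_congr rfl fun C _ => ?_
          congr 1
          exact Finset.filter_univ_mem _
      _ ≤ ∑ _C ∈ 𝓒, 3 := Finset.sum_le_sum fun C hC =>
          le_trans Finset.card_image_le (h3 C hC)
      _ = 3 * 𝓒.card := by rw [Finset.sum_const, smul_eq_mul, mul_comm]
  -- heavy bad bound, in ℝ
  have hA : γ * (𝓣s.card : ℝ) * (HB.card : ℝ)
      ≤ ∑ C ∈ HB, ((𝓣s.filter (fun T => C ∈ T)).card : ℝ) := by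
    have : ∀ C ∈ HB, γ * (𝓣s.card : ℝ) ≤ ((𝓣s.filter (fun T => C ∈ T)).card : ℝ) := by
      intro C hC'
      have := (Finset.mem_filter.mp hC').1
      exact (Finset.mem_filter.mp this).2
    calc γ * (𝓣s.card : ℝ) * (HB.card : ℝ)
        = ∑ _C ∈ HB, γ * (𝓣s.card : ℝ) := by rw [Finset.sum_const]; ring
      _ ≤ _ := Finset.sum_le_sum this
  have hB : (∑ C ∈ HB, ((𝓣s.filter (fun T => C ∈ T)).card : ℝ))
      ≤ (Δ : ℝ) * (ν * (Fintype.card X : ℝ) * (𝓣s.card : ℝ)) := by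
    calc (∑ C ∈ HB, ((𝓣s.filter (fun T => C ∈ T)).card : ℝ))
        = ((∑ T ∈ 𝓣s, (HB.filter (fun C => C ∈ T)).card : ℕ) : ℝ) := by
          rw [← hswap]; push_cast; ring
      _ ≤ ((∑ T ∈ 𝓣s, Δ * ((T.biUnion vars).filter (fun x => ψ x ≠ σ T x)).card : ℕ) : ℝ) := by
          exact_mod_cast Finset.sum_le_sum hC
      _ = (Δ : ℝ) * ∑ T ∈ 𝓣s,
            (((T.biUnion vars).filter (fun x => ψ x ≠ σ T x)).card : ℝ) := by
          push_cast; rw [Finset.mul_sum]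
      _ ≤ (Δ : ℝ) * (ν * (Fintype.card X : ℝ) * (𝓣s.card : ℝ)) := by
          exact mul_le_mul_of_nonneg_left hdis (Nat.cast_nonneg Δ)
  have hHBbound : (HB.card : ℝ) ≤ 3 * ν * (Δ : ℝ) / γ * (𝓒.card : ℝ) := by
    have htR : (0 : ℝ) < (𝓣s.card : ℝ) := by exact_mod_cast ht
    have h1' : γ * (HB.card : ℝ) ≤ (Δ : ℝ) * (ν * (Fintype.card X : ℝ)) := by
      have := le_trans hA hB
      have h2 : γ * (HB.card : ℝ) * (𝓣s.card : ℝ)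
          ≤ (Δ : ℝ) * (ν * (Fintype.card X : ℝ)) * (𝓣s.card : ℝ) := by nlinarith
      exact le_of_mul_le_mul_right h2 htR
    have hn' : (Fintype.card X : ℝ) ≤ 3 * (𝓒.card : ℝ) := by exact_mod_cast hn3m
    have hγ' : (HB.card : ℝ) ≤ (Δ : ℝ) * (ν * (Fintype.card X : ℝ)) / γ := by
      rw [le_div_iff₀ hγ]; nlinarith
    refine le_trans hγ' ?_
    rw [div_mul_eq_mul_div, div_le_div_iff₀ hγ hγ]
    nlinarith [mul_nonneg (mul_nonneg hν (Nat.cast_nonneg Δ)) hγ.le,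
      mul_le_mul_of_nonneg_left hn' (mul_nonneg hν (Nat.cast_nonneg Δ)), hγ.le]
  -- Hv ⊆ Sat ∪ HB
  have hF : (Hv.card : ℝ) ≤ (Sat.card : ℝ) + (HB.card : ℝ) := by
    have : Hv ⊆ Sat ∪ HB := by
      intro C hC'
      by_cases h : ∃ l ∈ lit C, ψ l.1 = l.2
      · exact Finset.mem_union_left _
          (Finset.mem_filter.mpr ⟨(Finset.mem_filter.mp hC').1, h⟩)
      · exact Finset.mem_union_right _ (Finset.mem_filter.mpr ⟨hC', h⟩)
    have := le_trans (Finset.card_le_card this) (Finset.card_union_le Sat HB)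
    exact_mod_cast this
  have hunif' : (1 - μ) * (𝓒.card : ℝ) ≤ (Hv.card : ℝ) := hunif
  rw [show ((𝓒.filter (fun C => ∃ l ∈ lit C, ψ l.1 = l.2)).card : ℝ) = (Sat.card : ℝ) from rfl]
  linarith [hunif', hF, hHBbound]
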